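/- Let G be a nontrivial (G ≠ {e}) directed po-group satisfying RDP₁, I a nonempty set, φ : I → I a bijection, and n ≥ 1. Then the following are equivalent: (1) G possesses a least nontrivial o-ideal and for all i, j ∈ I there exists m ∈ ℤ with φ^m(i) = j; (2) E = [0̄, u_n] possesses a least nontrivial normal ideal. -/

import Mathlib

open Function

variable {I G : Type*}

def kmul [Mul G] (φ : Equiv.Perm I) (p q : ℤ × (I → G)) : ℤ × (I → G) :=
  (p.1 + q.1, fun i => p.2 i * q.2 ((φ ^ p.1) i))

def kone [One G] : ℤ × (I → G) := (0, fun _ => 1)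

def kunit [One G] (n : ℤ) : ℤ × (I → G) := (n, fun _ => 1)

def kle [LE G] (p q : ℤ × (I → G)) : Prop :=
  p.1 < q.1 ∨ (p.1 = q.1 ∧ ∀ i, p.2 i ≤ q.2 i)

def kE [One G] [LE G] (n : ℤ) : Set (ℤ × (I → G)) :=
  {z | kle kone z ∧ kle z (kunit n)}

def kIsIdeal [Group G] [PartialOrder G] (φ : Equiv.Perm I) (n : ℤ)
    (J : Set (ℤ × (I → G))) : Prop :=
  J.Nonempty ∧ J ⊆ kE n ∧
  (∀ a ∈ J, ∀ b ∈ J, kle (kmul φ a b) (kunit n) → kmul φ a b ∈ J) ∧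
  (∀ a ∈ kE n, ∀ b ∈ J, kle a b → a ∈ J)

def kIsNormalIdeal [Group G] [PartialOrder G] (φ : Equiv.Perm I) (n : ℤ)
    (J : Set (ℤ × (I → G))) : Prop :=
  kIsIdeal φ n J ∧
  ∀ z ∈ kE n,
    {w | ∃ a ∈ J, kmul φ z a = w ∧ kle w (kunit n)} =
    {w | ∃ b ∈ J, kmul φ b z = w ∧ kle w (kunit n)}

/-- An o-ideal of a po-group `G`: a normal, convex and directed subgroup. -/
def IsOIdeal [Group G] [PartialOrder G] (H : Subgroup G) : Prop :=
  (∀ g ∈ H, ∀ x : G, x * g * x⁻¹ ∈ H) ∧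
  (∀ a ∈ H, ∀ b ∈ H, ∀ g : G, a ≤ g → g ≤ b → g ∈ H) ∧
  (∀ a ∈ H, ∀ b ∈ H, ∃ c ∈ H, a ≤ c ∧ b ≤ c)

def HasLeastNormalIdeal [Group G] [PartialOrder G] (φ : Equiv.Perm I) (n : ℤ) : Prop :=
  ∃ J : Set (ℤ × (I → G)), kIsNormalIdeal φ n J ∧ J ≠ {kone} ∧
    ∀ J' : Set (ℤ × (I → G)), kIsNormalIdeal φ n J' → J' ≠ {kone} → J ⊆ J'

def HasLeastOIdeal (G : Type*) [Group G] [PartialOrder G] : Prop :=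
  ∃ H : Subgroup G, IsOIdeal H ∧ H ≠ ⊥ ∧
    ∀ H' : Subgroup G, IsOIdeal H' → H' ≠ ⊥ → H ≤ H'

/-- The RDP₁ property for `(le, mul, one)`. -/
def RDP1rel {α : Type*} (le : α → α → Prop) (mul : α → α → α) (one : α) : Prop :=
  ∀ a1 a2 b1 b2 : α, le one a1 → le one a2 → le one b1 → le one b2 →
    mul a1 a2 = mul b1 b2 →
    ∃ c11 c12 c21 c22 : α,
      le one c11 ∧ le one c12 ∧ le one c21 ∧ le one c22 ∧
      a1 = mul c11 c12 ∧ a2 = mul c21 c22 ∧ b1 = mul c11 c21 ∧ b2 = mul c12 c22 ∧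
      (∀ x y : α, le one x → le x c12 → le one y → le y c21 → mul x y = mul y x)

set_option linter.unusedSectionVars false
set_option linter.unusedVariables false
section Aux

variable [Group G] [PartialOrder G]
  [CovariantClass G G (· * ·) (· ≤ ·)] [CovariantClass G G (swap (· * ·)) (· ≤ ·)]
  {φ : Equiv.Perm I} {n : ℤ}

/-- A "core": set of positive functions closed under the relevant operations. -/
def IsCore (φ : Equiv.Perm I) (C : Set (I → G)) : Prop :=
  (fun _ => (1:G)) ∈ C ∧
  (∀ f ∈ C, ∀ i, (1:G) ≤ f i) ∧
  (∀ f ∈ C, ∀ g ∈ C, (fun i => f i * g i) ∈ C) ∧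
  (∀ f ∈ C, ∀ g : I → G, (∀ i, (1:G) ≤ g i) → (∀ i, g i ≤ f i) → g ∈ C) ∧
  (∀ f ∈ C, ∀ k : ℤ, ∀ c : I → G, (fun i => c i * f ((φ^k) i) * (c i)⁻¹) ∈ C)

def Cideal (C : Set (I → G)) : Set (ℤ × (I → G)) := {p | p.1 = 0 ∧ p.2 ∈ C}

lemma mem_kE_of_zero (hn : 1 ≤ n) {f : I → G} (hf : ∀ i, (1:G) ≤ f i) :
    ((0, f) : ℤ × (I → G)) ∈ kE n :=
  ⟨Or.inr ⟨rfl, hf⟩, Or.inl (by show (0:ℤ) < n; omega)⟩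

lemma cideal_sub (hn : 1 ≤ n) (hC : IsCore φ C) : Cideal C ⊆ kE (G := G) (I := I) n := by
  rintro ⟨k, f⟩ ⟨hk, hf⟩
  cases hk
  exact mem_kE_of_zero hn (hC.2.1 f hf)

lemma cideal_normal (hn : 1 ≤ n) (hC : IsCore φ C) :
    kIsNormalIdeal φ n (Cideal (G := G) C) := by
  obtain ⟨h1, hpos, hmul, hdown, hconj⟩ := hC
  refine ⟨⟨⟨kone, ⟨rfl, h1⟩⟩, cideal_sub hn ⟨h1, hpos, hmul, hdown, hconj⟩, ?_, ?_⟩, ?_⟩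
  · rintro ⟨k, f⟩ ⟨hk, hf⟩ ⟨l, g⟩ ⟨hl, hg⟩ _
    cases hk; cases hl
    refine ⟨rfl, ?_⟩
    have : (fun i => f i * g ((φ ^ (0:ℤ)) i)) = fun i => f i * g i := by
      funext i; simp
    simpa [kmul, this] using hmul f hf g hg
  · rintro ⟨k, f⟩ hkE ⟨l, g⟩ ⟨hl, hg⟩ hle
    cases hl
    have h0 : (0:ℤ) ≤ k := by
      rcases hkE.1 with h | h
      · exact le_of_lt h
      · exact le_of_eq h.1
    rcases hle with h | h
    · exact absurd h (by simpa using h0.not_gt)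
    · obtain ⟨hk0, hfg⟩ := h
      cases hk0
      have hf1 : ∀ i, (1:G) ≤ f i := by
        rcases hkE.1 with h | h
        · exact absurd h (lt_irrefl _)
        · exact h.2
      exact ⟨rfl, hdown g hg f hf1 hfg⟩
  · rintro ⟨k, c⟩ hz
    ext w
    constructor
    · rintro ⟨⟨l, f⟩, ⟨hl, hf⟩, hw, hwn⟩
      cases hl
      refine ⟨(0, fun i => c i * f ((φ^k) i) * (c i)⁻¹),
        ⟨rfl, hconj f hf k c⟩, ?_, hwn⟩
      rw [← hw]
      simp only [kmul]
      refine Prod.ext (by simp) ?_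
      funext i
      simp [mul_assoc]
    · rintro ⟨⟨l, f⟩, ⟨hl, hf⟩, hw, hwn⟩
      cases hl
      refine ⟨(0, fun i => (c ((φ^(-k)) i))⁻¹ * f ((φ^(-k)) i) * (c ((φ^(-k)) i))⁻¹⁻¹),
        ⟨rfl, hconj f hf (-k) _⟩, ?_, hwn⟩
      rw [← hw]
      simp only [kmul]
      refine Prod.ext (by simp [add_comm]) ?_
      funext i
      have hik : (φ ^ (-k)) ((φ ^ k) i) = i := by
        rw [zpow_neg]
        exact Equiv.symm_apply_apply _ _
      simp only [zpow_zero, Equiv.Perm.coe_one, id_eq, hik, inv_inv]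
      group
      simp [Equiv.Perm.one_apply]

lemma cideal_netriv {C : Set (I → G)} (hC : IsCore φ C) {f : I → G} (hf : f ∈ C)
    {i : I} (hfi : f i ≠ 1) : Cideal (G := G) C ≠ {kone} := by
  intro h
  have : ((0 : ℤ), f) ∈ Cideal (G := G) C := ⟨rfl, hf⟩
  rw [h] at this
  have := congrFun (congrArg Prod.snd this) i
  exact hfi this

lemma conj_le' {a b : G} (x : G) (h : a ≤ b) : x * a * x⁻¹ ≤ x * b * x⁻¹ :=
  mul_le_mul_left (mul_le_mul_right h x) x⁻¹

lemma conj_pos' {a : G} (x : G) (h : (1:G) ≤ a) : (1:G) ≤ x * a * x⁻¹ := by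
  have := conj_le' x h
  simpa using this

lemma inv_le_inv_of_le' {a b : G} (h : a ≤ b) : b⁻¹ ≤ a⁻¹ := by
  have := mul_le_mul_left (mul_le_mul_right h b⁻¹) a⁻¹
  simpa [mul_assoc] using this

/-- The core attached to an o-ideal `H`. -/
def oCore (H : Subgroup G) : Set (I → G) :=
  {f : I → G | (∀ i, 1 ≤ f i ∧ f i ∈ H) ∧ {i | f i ≠ 1}.Finite}

lemma isCore_oCore (H : Subgroup G) (hH : IsOIdeal H) :
    IsCore φ (oCore (I := I) H) := by
  refine ⟨⟨fun i => ⟨le_refl 1, H.one_mem⟩, by simp⟩, fun f hf i => (hf.1 i).1, ?_, ?_, ?_⟩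
  · rintro f ⟨hf, hffin⟩ g ⟨hg, hgfin⟩
    refine ⟨fun i => ⟨one_le_mul (hf i).1 (hg i).1, H.mul_mem (hf i).2 (hg i).2⟩, ?_⟩
    refine (hffin.union hgfin).subset ?_
    intro i hi
    by_contra hcon
    simp only [Set.mem_union, Set.mem_setOf_eq] at hcon
    push_neg at hcon
    simp only [Set.mem_setOf_eq, hcon.1, hcon.2, one_mul] at hi
    exact hi rfl
  · rintro f ⟨hf, hffin⟩ g hg1 hgf
    refine ⟨fun i => ⟨hg1 i, hH.2.1 1 H.one_mem (f i) (hf i).2 (g i) (hg1 i) (hgf i)⟩, ?_⟩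
    refine hffin.subset ?_
    intro i hi
    simp only [Set.mem_setOf_eq] at hi ⊢
    intro hfi
    exact hi (le_antisymm (hfi ▸ hgf i) (hg1 i))
  · rintro f ⟨hf, hffin⟩ k c
    refine ⟨fun i => ⟨conj_pos' (c i) (hf _).1, hH.1 _ (hf _).2 (c i)⟩, ?_⟩
    refine (hffin.preimage ((φ^k).injective.injOn)).subset ?_
    intro i hi
    simp only [Set.mem_setOf_eq, Set.mem_preimage] at hi ⊢
    intro hfi
    rw [hfi] at hi
    simp at hi

/-- The core attached to the orbit of `i₀`. -/
def orbCore (φ : Equiv.Perm I) (i₀ : I) : Set (I → G) :=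
  {f : I → G | ∀ i, 1 ≤ f i ∧ (f i ≠ 1 → ∃ m : ℤ, (φ^m) i₀ = i)}

lemma isCore_orbCore (i₀ : I) : IsCore φ (orbCore (G := G) φ i₀) := by
  refine ⟨fun i => ⟨le_refl 1, fun h => absurd rfl h⟩, fun f hf i => (hf i).1, ?_, ?_, ?_⟩
  · intro f hf g hg
    refine fun i => ⟨one_le_mul (hf i).1 (hg i).1, fun h => ?_⟩
    by_cases hfi : f i = 1
    · exact (hg i).2 (by simpa [hfi] using h)
    · exact (hf i).2 hfi
  · intro f hf g hg1 hgf
    refine fun i => ⟨hg1 i, fun h => (hf i).2 fun hfi => ?_⟩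
    exact h (le_antisymm (hfi ▸ hgf i) (hg1 i))
  · intro f hf k c
    refine fun i => ⟨conj_pos' (c i) (hf _).1, fun h => ?_⟩
    have hne : f ((φ^k) i) ≠ 1 := by
      intro hfi
      simp [hfi] at h
    obtain ⟨m, hm⟩ := (hf _).2 hne
    refine ⟨-k + m, ?_⟩
    rw [zpow_add]
    simp only [Equiv.Perm.mul_apply, hm, zpow_neg]
    exact Equiv.symm_apply_apply _ _

lemma exists_pos_ne_one_in (H : Subgroup G) (hH : IsOIdeal H) (hne : H ≠ ⊥) :
    ∃ s : G, s ∈ H ∧ 1 ≤ s ∧ s ≠ 1 := by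
  have : ∃ h ∈ H, h ≠ (1:G) := by
    by_contra hcon
    push_neg at hcon
    exact hne ((Subgroup.eq_bot_iff_forall H).mpr hcon)
  obtain ⟨h, hhH, hh1⟩ := this
  obtain ⟨c, hcH, hhc, h1c⟩ := hH.2.2 h hhH 1 H.one_mem
  by_cases hc1 : c = 1
  · obtain ⟨c', hc'H, hhc', h1c'⟩ := hH.2.2 h⁻¹ (H.inv_mem hhH) 1 H.one_mem
    refine ⟨c', hc'H, h1c', fun hcc => ?_⟩
    rw [hcc] at hhc'
    have h1h : (1:G) ≤ h := by simpa using inv_le_inv_of_le' hhc'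
    exact hh1 (le_antisymm (hc1 ▸ hhc) h1h)
  · exact ⟨c, hcH, h1c, hc1⟩

lemma isOIdeal_top (hdir : ∀ a b : G, ∃ c, a ≤ c ∧ b ≤ c) :
    IsOIdeal (⊤ : Subgroup G) := by
  refine ⟨fun _ _ _ => Subgroup.mem_top _, fun _ _ _ _ g _ _ => Subgroup.mem_top g, ?_⟩
  intro a _ b _
  obtain ⟨c, h⟩ := hdir a b
  exact ⟨c, Subgroup.mem_top c, h⟩

lemma top_ne_bot' (hG : ∃ g : G, g ≠ 1) : (⊤ : Subgroup G) ≠ ⊥ := by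
  obtain ⟨g, hg⟩ := hG
  intro h
  have : g ∈ (⊥ : Subgroup G) := h ▸ Subgroup.mem_top g
  exact hg (Subgroup.mem_bot.mp this)

/-- Subgroup generated as convex hull of a suitable monoid `N`. -/
def Hgen (N : Set G) (h1 : (1:G) ∈ N) (hmul : ∀ m ∈ N, ∀ m' ∈ N, m * m' ∈ N)
    (hpos : ∀ m ∈ N, (1:G) ≤ m) : Subgroup G where
  carrier := {g | ∃ m ∈ N, m⁻¹ ≤ g ∧ g ≤ m}
  one_mem' := ⟨1, h1, by simp⟩
  mul_mem' := by
    rintro a b ⟨m, hm, hma, ham⟩ ⟨m', hm', hm'b, hbm'⟩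
    refine ⟨(m*m')*(m'*m), hmul _ (hmul m hm m' hm') _ (hmul m' hm' m hm), ?_, ?_⟩
    · calc ((m*m')*(m'*m))⁻¹ = (m'*m)⁻¹ * (m*m')⁻¹ := mul_inv_rev _ _
        _ ≤ (m'*m)⁻¹ * 1 := mul_le_mul_right (by simpa using inv_le_inv_of_le' (hpos _ (hmul m hm m' hm'))) _
        _ = m⁻¹ * m'⁻¹ := by rw [mul_one, mul_inv_rev]
        _ ≤ a * b := mul_le_mul' hma hm'b
    · calc a * b ≤ m * m' := mul_le_mul' ham hbm'
        _ ≤ (m*m')*(m'*m) := le_mul_of_one_le_right' (one_le_mul (hpos m' hm') (hpos m hm))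
  inv_mem' := by
    rintro a ⟨m, hm, hma, ham⟩
    exact ⟨m, hm, by simpa using inv_le_inv_of_le' ham, by simpa using inv_le_inv_of_le' hma⟩

lemma hgen_oideal (N : Set G) (h1 : (1:G) ∈ N) (hmul : ∀ m ∈ N, ∀ m' ∈ N, m * m' ∈ N)
    (hpos : ∀ m ∈ N, (1:G) ≤ m) (hconj : ∀ m ∈ N, ∀ x : G, x * m * x⁻¹ ∈ N) :
    IsOIdeal (Hgen N h1 hmul hpos) := by
  refine ⟨?_, ?_, ?_⟩
  · rintro g ⟨m, hm, hmg, hgm⟩ x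
    refine ⟨x * m * x⁻¹, hconj m hm x, ?_, conj_le' x hgm⟩
    have : (x * m * x⁻¹)⁻¹ = x * m⁻¹ * x⁻¹ := by group
    rw [this]
    exact conj_le' x hmg
  · rintro a ⟨ma, hma, hmaa, hama⟩ b ⟨mb, hmb, hmbb, hbmb⟩ g hag hgb
    refine ⟨ma * mb, hmul ma hma mb hmb, ?_, ?_⟩
    · calc (ma*mb)⁻¹ = mb⁻¹ * ma⁻¹ := mul_inv_rev _ _
        _ ≤ 1 * ma⁻¹ := mul_le_mul_left (by simpa using inv_le_inv_of_le' (hpos mb hmb)) _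
        _ = ma⁻¹ := one_mul _
        _ ≤ a := hmaa
        _ ≤ g := hag
    · calc g ≤ b := hgb
        _ ≤ mb := hbmb
        _ ≤ ma * mb := le_mul_of_one_le_left' (hpos ma hma)
  · rintro a ⟨ma, hma, hmaa, hama⟩ b ⟨mb, hmb, hmbb, hbmb⟩
    refine ⟨ma * mb, ⟨ma * mb, hmul ma hma mb hmb, ?_, le_refl _⟩, ?_, ?_⟩
    · have h1ab : (1:G) ≤ ma * mb := one_le_mul (hpos ma hma) (hpos mb hmb)
      exact le_trans (by simpa using inv_le_inv_of_le' h1ab) h1ab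
    · exact le_trans hama (le_mul_of_one_le_right' (hpos mb hmb))
    · exact le_trans hbmb (le_mul_of_one_le_left' (hpos ma hma))

lemma mem_hgen {N : Set G} {h1 hmul hpos} {g : G} :
    g ∈ Hgen N h1 hmul hpos ↔ ∃ m ∈ N, m⁻¹ ≤ g ∧ g ≤ m := Iff.rfl

section NJ

variable {J : Set (ℤ × (I → G))} {f g c : I → G}

lemma kone_mem_kE (hn : 1 ≤ n) : (kone : ℤ × (I → G)) ∈ kE n :=
  mem_kE_of_zero hn (fun _ => le_refl 1)

lemma nj_pos (hJ : kIsNormalIdeal φ n J) (hf : ((0:ℤ), f) ∈ J) :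
    ∀ i, (1:G) ≤ f i := by
  have hkE := hJ.1.2.1 hf
  rcases hkE.1 with h | h
  · simp [kone] at h
  · exact h.2

lemma nj_kone (hn : 1 ≤ n) (hJ : kIsNormalIdeal φ n J) : (kone : ℤ × (I → G)) ∈ J := by
  obtain ⟨p, hp⟩ := hJ.1.1
  exact hJ.1.2.2.2 kone (kone_mem_kE hn) p hp (hJ.1.2.1 hp).1

lemma nj_mul (hn : 1 ≤ n) (hJ : kIsNormalIdeal φ n J)
    (hf : ((0:ℤ), f) ∈ J) (hg : ((0:ℤ), g) ∈ J) :
    ((0:ℤ), fun i => f i * g i) ∈ J := by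
  have he : kmul φ ((0:ℤ),f) ((0:ℤ),g) = ((0:ℤ), fun i => f i * g i) := by
    refine Prod.ext (by simp [kmul]) ?_
    funext i; simp [kmul]
  have h := hJ.1.2.2.1 _ hf _ hg (by rw [he]; exact Or.inl (by simp [kunit]; omega))
  rwa [he] at h

lemma nj_down (hn : 1 ≤ n) (hJ : kIsNormalIdeal φ n J) (hf : ((0:ℤ), f) ∈ J)
    (hg1 : ∀ i, (1:G) ≤ g i) (hgf : ∀ i, g i ≤ f i) : ((0:ℤ), g) ∈ J :=
  hJ.1.2.2.2 _ (mem_kE_of_zero hn hg1) _ hf (Or.inr ⟨rfl, hgf⟩)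

lemma nj_conj_pos (hn : 1 ≤ n) (hJ : kIsNormalIdeal φ n J)
    (hf : ((0:ℤ), f) ∈ J) (hc : ∀ i, (1:G) ≤ c i) :
    ((0:ℤ), fun i => c i * f i * (c i)⁻¹) ∈ J := by
  have hz : ((0:ℤ), c) ∈ kE n := mem_kE_of_zero hn hc
  have hw : kmul φ ((0:ℤ),c) ((0:ℤ),f) = ((0:ℤ), fun i => c i * f i) :=
    Prod.ext (by simp [kmul]) (by funext i; simp [kmul])
  have hmem : ((0:ℤ), fun i => c i * f i) ∈
      {w | ∃ a ∈ J, kmul φ ((0:ℤ),c) a = w ∧ kle w (kunit n)} :=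
    ⟨((0:ℤ),f), hf, hw, Or.inl (by simp [kunit]; omega)⟩
  rw [hJ.2 _ hz] at hmem
  obtain ⟨⟨l, h⟩, hbJ, hbz, _⟩ := hmem
  have hl : l = 0 := by
    have := congrArg Prod.fst hbz
    simp [kmul] at this
    omega
  subst hl
  have hh : h = fun i => c i * f i * (c i)⁻¹ := by
    funext i
    have := congrFun (congrArg Prod.snd hbz) i
    simp only [kmul, zpow_zero, Equiv.Perm.coe_one, id_eq] at this
    calc h i = h i * c i * (c i)⁻¹ := by group
      _ = c i * f i * (c i)⁻¹ := by rw [this]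
  exact hh ▸ hbJ

lemma nj_conj_neg (hn : 1 ≤ n) (hJ : kIsNormalIdeal φ n J)
    (hf : ((0:ℤ), f) ∈ J) (hc : ∀ i, (1:G) ≤ c i) :
    ((0:ℤ), fun i => (c i)⁻¹ * f i * c i) ∈ J := by
  have hz : ((0:ℤ), c) ∈ kE n := mem_kE_of_zero hn hc
  have hw : kmul φ ((0:ℤ),f) ((0:ℤ),c) = ((0:ℤ), fun i => f i * c i) :=
    Prod.ext (by simp [kmul]) (by funext i; simp [kmul])
  have hmem : ((0:ℤ), fun i => f i * c i) ∈
      {w | ∃ b ∈ J, kmul φ b ((0:ℤ),c) = w ∧ kle w (kunit n)} :=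
    ⟨((0:ℤ),f), hf, hw, Or.inl (by simp [kunit]; omega)⟩
  rw [← hJ.2 _ hz] at hmem
  obtain ⟨⟨l, h⟩, haJ, haz, _⟩ := hmem
  have hl : l = 0 := by
    have := congrArg Prod.fst haz
    simp [kmul] at this
    omega
  subst hl
  have hh : h = fun i => (c i)⁻¹ * f i * c i := by
    funext i
    have := congrFun (congrArg Prod.snd haz) i
    simp only [kmul, zpow_zero, Equiv.Perm.coe_one, id_eq] at this
    calc h i = (c i)⁻¹ * (c i * h i) := by group
      _ = (c i)⁻¹ * f i * c i := by rw [this]; group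
  exact hh ▸ haJ

lemma nj_conj_any (hn : 1 ≤ n) (hJ : kIsNormalIdeal φ n J)
    (hdir : ∀ a b : G, ∃ c, a ≤ c ∧ b ≤ c)
    (hf : ((0:ℤ), f) ∈ J) (x : I → G) :
    ((0:ℤ), fun i => x i * f i * (x i)⁻¹) ∈ J := by
  have hchoice : ∀ i, ∃ c, x i ≤ c ∧ (1:G) ≤ c := fun i => hdir (x i) 1
  choose c hxc h1c using hchoice
  have h1d : ∀ i, (1:G) ≤ (x i)⁻¹ * c i := fun i => by
    have := mul_le_mul_right (hxc i) (x i)⁻¹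
    simpa using this
  have step1 := nj_conj_neg hn hJ hf h1d
  have step2 := nj_conj_pos hn hJ step1 h1c
  have he : (fun i => c i * (((x i)⁻¹ * c i)⁻¹ * f i * ((x i)⁻¹ * c i)) * (c i)⁻¹)
      = fun i => x i * f i * (x i)⁻¹ := by
    funext i; group
  rw [← he]
  exact step2

lemma nj_shift (hn : 1 ≤ n) (hJ : kIsNormalIdeal φ n J)
    (hf : ((0:ℤ), f) ∈ J) : ((0:ℤ), fun i => f (φ i)) ∈ J := by
  have hf1 : ∀ i, (1:G) ≤ f i := nj_pos hJ hf
  have hz : ((1:ℤ), fun i => (f (φ i))⁻¹) ∈ kE n := by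
    constructor
    · exact Or.inl (by simp [kone])
    · rcases lt_or_eq_of_le hn with h | h
      · exact Or.inl h
      · exact Or.inr ⟨h, fun i => by simp only [kunit]; simpa using inv_le_inv_of_le' (hf1 (φ i))⟩
  have hw : kmul φ ((1:ℤ), fun i => (f (φ i))⁻¹) ((0:ℤ), f) = ((1:ℤ), fun _ => (1:G)) := by
    refine Prod.ext (by simp [kmul]) ?_
    funext i; simp [kmul, zpow_one]
  have hu : kle ((1:ℤ), fun _ => (1:G)) (kunit (G := G) (I := I) n) := by
    rcases lt_or_eq_of_le hn with h | h
    · exact Or.inl h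
    · exact Or.inr ⟨h, fun i => le_refl 1⟩
  have hmem : ((1:ℤ), fun _ => (1:G)) ∈
      {w | ∃ a ∈ J, kmul φ ((1:ℤ), fun i => (f (φ i))⁻¹) a = w ∧ kle w (kunit n)} :=
    ⟨((0:ℤ), f), hf, hw, hu⟩
  rw [hJ.2 _ hz] at hmem
  obtain ⟨⟨l, h⟩, hbJ, hbz, _⟩ := hmem
  have hl : l = 0 := by
    have := congrArg Prod.fst hbz
    simp [kmul] at this
    omega
  subst hl
  have hh : h = fun i => f (φ i) := by
    funext i
    have := congrFun (congrArg Prod.snd hbz) i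
    simp only [kmul, zpow_zero, Equiv.Perm.coe_one, id_eq] at this
    calc h i = h i * (f (φ i))⁻¹ * f (φ i) := by group
      _ = 1 * f (φ i) := by rw [this]
      _ = f (φ i) := one_mul _
  exact hh ▸ hbJ

lemma nj_shift_inv (hn : 1 ≤ n) (hJ : kIsNormalIdeal φ n J)
    (hf : ((0:ℤ), f) ∈ J) : ((0:ℤ), fun i => f (φ⁻¹ i)) ∈ J := by
  have hf1 : ∀ i, (1:G) ≤ f i := nj_pos hJ hf
  have hz : ((1:ℤ), fun i => (f i)⁻¹) ∈ kE n := by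
    constructor
    · exact Or.inl (by simp [kone])
    · rcases lt_or_eq_of_le hn with h | h
      · exact Or.inl h
      · exact Or.inr ⟨h, fun i => by simp only [kunit]; simpa using inv_le_inv_of_le' (hf1 i)⟩
  have hw : kmul φ ((0:ℤ), f) ((1:ℤ), fun i => (f i)⁻¹) = ((1:ℤ), fun _ => (1:G)) := by
    refine Prod.ext (by simp [kmul]) ?_
    funext i; simp [kmul]
  have hu : kle ((1:ℤ), fun _ => (1:G)) (kunit (G := G) (I := I) n) := by
    rcases lt_or_eq_of_le hn with h | h
    · exact Or.inl h
    · exact Or.inr ⟨h, fun i => le_refl 1⟩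
  have hmem : ((1:ℤ), fun _ => (1:G)) ∈
      {w | ∃ b ∈ J, kmul φ b ((1:ℤ), fun i => (f i)⁻¹) = w ∧ kle w (kunit n)} :=
    ⟨((0:ℤ), f), hf, hw, hu⟩
  rw [← hJ.2 _ hz] at hmem
  obtain ⟨⟨l, h⟩, haJ, haz, _⟩ := hmem
  have hl : l = 0 := by
    have := congrArg Prod.fst haz
    simp [kmul] at this
    omega
  subst hl
  have hkey : ∀ i, h (φ i) = f i := by
    intro i
    have := congrFun (congrArg Prod.snd haz) i
    simp only [kmul, zpow_one] at this
    calc h (φ i) = f i * ((f i)⁻¹ * h (φ i)) := by group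
      _ = f i * 1 := by rw [this]
      _ = f i := mul_one _
  have hh : h = fun i => f (φ⁻¹ i) := by
    funext j
    have := hkey (φ⁻¹ j)
    rwa [show φ (φ⁻¹ j) = j from φ.apply_symm_apply j] at this
  exact hh ▸ haJ

lemma nj_shift_zpow (hn : 1 ≤ n) (hJ : kIsNormalIdeal φ n J)
    (hf : ((0:ℤ), f) ∈ J) (m : ℤ) : ((0:ℤ), fun i => f ((φ^m) i)) ∈ J := by
  induction m using Int.induction_on with
  | zero => simpa using hf
  | succ k ih =>
      have := nj_shift hn hJ ih
      have he : (fun i => f ((φ^(k:ℤ)) (φ i))) = fun i => f ((φ^((k:ℤ)+1)) i) := by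
        funext i
        rw [zpow_add_one]
        simp
      rw [← he]
      exact this
  | pred k ih =>
      have := nj_shift_inv hn hJ ih
      have he : (fun i => f ((φ^(-(k:ℤ))) (φ⁻¹ i))) = fun i => f ((φ^(-(k:ℤ)-1)) i) := by
        funext i
        rw [zpow_sub_one]
        simp
      rw [← he]
      exact this

end NJ

open scoped Classical in
/-- Function that is `s` at `i` and `1` elsewhere. -/
noncomputable def kdelta (i : I) (s : G) : I → G := fun j => if j = i then s else 1

lemma kdelta_self (i : I) (s : G) : kdelta i s i = s := by simp [kdelta]

lemma kdelta_ne {i j : I} (s : G) (h : j ≠ i) : kdelta i s j = 1 := by simp [kdelta, h]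

lemma kdelta_pos {s : G} (hs : (1:G) ≤ s) (i j : I) : (1:G) ≤ kdelta i s j := by
  unfold kdelta
  split
  · exact hs
  · exact le_refl 1

lemma kdelta_shift {φ : Equiv.Perm I} {i j : I} (s : G) {m : ℤ} (hm : (φ^m) j = i) :
    (fun l => kdelta i s ((φ^m) l)) = kdelta j s := by
  funext l
  by_cases hl : l = j
  · subst hl
    rw [hm, kdelta_self, kdelta_self]
  · have h1 : (φ^m) l ≠ i := fun hc => hl ((φ^m).injective (hc.trans hm.symm))
    rw [kdelta_ne s h1, kdelta_ne s hl]

section NJ2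

variable {J : Set (ℤ × (I → G))} {f : I → G}

/-- The set of positive elements realizable as deltas at every index inside `J`. -/
def njSet (J : Set (ℤ × (I → G))) : Set G :=
  {g : G | (1:G) ≤ g ∧ ∀ j : I, ((0:ℤ), kdelta j g) ∈ J}

lemma njSet_one (hn : 1 ≤ n) (hJ : kIsNormalIdeal φ n J) : (1:G) ∈ njSet J := by
  refine ⟨le_refl 1, fun j => ?_⟩
  have he : kdelta j (1:G) = fun _ => (1:G) := by
    funext l
    unfold kdelta
    split <;> rfl
  rw [he]
  exact nj_kone hn hJ

lemma njSet_mul (hn : 1 ≤ n) (hJ : kIsNormalIdeal φ n J) :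
    ∀ m ∈ njSet J, ∀ m' ∈ njSet (I := I) (G := G) J, m * m' ∈ njSet J := by
  rintro m ⟨hm1, hm⟩ m' ⟨hm'1, hm'⟩
  refine ⟨one_le_mul hm1 hm'1, fun j => ?_⟩
  have := nj_mul hn hJ (hm j) (hm' j)
  have he : (fun i => kdelta j m i * kdelta j m' i) = kdelta j (m * m') := by
    funext l
    by_cases hl : l = j
    · subst hl; rw [kdelta_self, kdelta_self, kdelta_self]
    · rw [kdelta_ne _ hl, kdelta_ne _ hl, kdelta_ne _ hl, one_mul]
  rwa [he] at this

lemma njSet_pos : ∀ m ∈ njSet (I := I) (G := G) J, (1:G) ≤ m := fun _ hm => hm.1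

lemma njSet_conj (hn : 1 ≤ n) (hJ : kIsNormalIdeal φ n J)
    (hdir : ∀ a b : G, ∃ c, a ≤ c ∧ b ≤ c) :
    ∀ m ∈ njSet (I := I) (G := G) J, ∀ x : G, x * m * x⁻¹ ∈ njSet J := by
  rintro m ⟨hm1, hm⟩ x
  refine ⟨conj_pos' x hm1, fun j => ?_⟩
  have := nj_conj_any hn hJ hdir (hm j) (fun _ => x)
  have he : (fun i => x * kdelta j m i * x⁻¹) = kdelta j (x * m * x⁻¹) := by
    funext l
    by_cases hl : l = j
    · subst hl; rw [kdelta_self, kdelta_self]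
    · rw [kdelta_ne _ hl, kdelta_ne _ hl]; group
  rwa [he] at this

lemma nj_delta_mem (hn : 1 ≤ n) (hJ : kIsNormalIdeal φ n J)
    (htrans : ∀ i j : I, ∃ m : ℤ, (φ^m) i = j)
    (hf : ((0:ℤ), f) ∈ J) (k : I) : ∀ j : I, ((0:ℤ), kdelta j (f k)) ∈ J := by
  intro j
  have hf1 := nj_pos hJ hf
  have hdk : ((0:ℤ), kdelta k (f k)) ∈ J := by
    refine nj_down hn hJ hf (kdelta_pos (hf1 k) k) (fun l => ?_)
    by_cases hl : l = k
    · subst hl; rw [kdelta_self]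
    · rw [kdelta_ne _ hl]; exact hf1 l
  obtain ⟨m, hm⟩ := htrans j k
  have := nj_shift_zpow hn hJ hdk m
  rwa [kdelta_shift (f k) hm] at this

lemma nj_exists_ne (hJ : kIsNormalIdeal φ n J) (hJne : J ≠ {kone})
    (h0 : ∀ p ∈ J, p.1 = 0) :
    ∃ f : I → G, ((0:ℤ), f) ∈ J ∧ ∃ i₀, f i₀ ≠ 1 := by
  have hex : ∃ p ∈ J, p ≠ kone := by
    by_contra hcon
    push_neg at hcon
    apply hJne
    ext q
    constructor
    · exact fun hq => hcon q hq
    · rintro rfl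
      obtain ⟨p, hp⟩ := hJ.1.1
      exact (hcon p hp) ▸ hp
  obtain ⟨⟨l, f⟩, hpJ, hpne⟩ := hex
  have hl : l = 0 := h0 _ hpJ
  subst hl
  refine ⟨f, hpJ, ?_⟩
  by_contra hcon
  push_neg at hcon
  apply hpne
  have : f = fun _ => (1:G) := funext hcon
  rw [this]
  rfl

end NJ2

/-- Leastness of the o-ideal-induced normal ideal. -/
lemma least_dir (hn : 1 ≤ n) (hdir : ∀ a b : G, ∃ c, a ≤ c ∧ b ≤ c)
    (htrans : ∀ i j : I, ∃ m : ℤ, (φ^m) i = j)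
    (H : Subgroup G) (hH : IsOIdeal H)
    (hHleast : ∀ H' : Subgroup G, IsOIdeal H' → H' ≠ ⊥ → H ≤ H')
    (J' : Set (ℤ × (I → G))) (hJ' : kIsNormalIdeal φ n J') (hJ'ne : J' ≠ {kone}) :
    Cideal (oCore H) ⊆ J' := by
  by_cases hcase : ∃ p ∈ J', p.1 ≠ 0
  · obtain ⟨p, hpJ, hp0⟩ := hcase
    have hp := hJ'.1.2.1 hpJ
    have h0p : (0:ℤ) < p.1 := by
      rcases hp.1 with h | h
      · simpa [kone] using h
      · exact absurd h.1.symm (by simpa [kone] using hp0)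
    intro q hq
    refine hJ'.1.2.2.2 q (cideal_sub (φ := φ) hn (isCore_oCore H hH) hq) p hpJ (Or.inl ?_)
    rw [hq.1]
    exact h0p
  · push_neg at hcase
    obtain ⟨f₀, hf₀J, i₀, hi₀⟩ := nj_exists_ne hJ' hJ'ne hcase
    have hs1 : (1:G) ≤ f₀ i₀ := nj_pos hJ' hf₀J i₀
    have hsN : f₀ i₀ ∈ njSet J' := ⟨hs1, nj_delta_mem hn hJ' htrans hf₀J i₀⟩
    set Hs := Hgen (njSet J') (njSet_one hn hJ') (njSet_mul hn hJ') njSet_pos with hHs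
    have hHsO : IsOIdeal Hs := hgen_oideal _ _ _ _ (njSet_conj hn hJ' hdir)
    have hHsne : Hs ≠ ⊥ := by
      intro hbot
      have hmem : f₀ i₀ ∈ Hs :=
        ⟨f₀ i₀, hsN, le_trans (by simpa using inv_le_inv_of_le' hs1) hs1, le_refl _⟩
      rw [hbot] at hmem
      exact hi₀ (Subgroup.mem_bot.mp hmem)
    have hHHs : H ≤ Hs := hHleast Hs hHsO hHsne
    rintro ⟨l, f⟩ ⟨hl, hfH, hffin⟩
    simp only at hl
    subst hl
    have hf1 : ∀ i, (1:G) ≤ f i := fun i => (hfH i).1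
    -- build a dominating element of J' by induction on the support
    have key : ∀ T : Finset I, ∃ F : I → G, ((0:ℤ), F) ∈ J' ∧ ∀ i ∈ T, f i ≤ F i := by
      intro T
      classical
      induction T using Finset.induction_on with
      | empty => exact ⟨fun _ => 1, nj_kone hn hJ', fun i hi => absurd hi (by simp)⟩
      | @insert a T ha ih =>
          obtain ⟨F, hFJ, hFle⟩ := ih
          obtain ⟨m, hmN, _, hfam⟩ := hHHs (hfH a).2
          refine ⟨fun i => kdelta a m i * F i, nj_mul hn hJ' (hmN.2 a) hFJ, ?_⟩
          intro i hi
          rcases Finset.mem_insert.mp hi with rfl | hiT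
          · simp only [kdelta_self]
            exact le_trans hfam (le_mul_of_one_le_right' (nj_pos hJ' hFJ i))
          · exact le_trans (hFle i hiT) (le_mul_of_one_le_left' (kdelta_pos hmN.1 a i))
    obtain ⟨F, hFJ, hFle⟩ := key hffin.toFinset
    refine nj_down hn hJ' hFJ hf1 (fun i => ?_)
    by_cases hi : f i = 1
    · rw [hi]; exact nj_pos hJ' hFJ i
    · exact hFle i (hffin.mem_toFinset.mpr hi)

end Aux

/-- for a nontrivial directed po-group `G` with RDP₁, a nonempty `I`,
a bijection `φ` and `n ≥ 1`, the following are equivalent: (1) `G` possesses a least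
nontrivial o-ideal and all indices are connected by powers of `φ`; (2) `E = [0̄, u_n]`
possesses a least nontrivial normal ideal. -/
theorem stmt14 [Group G] [PartialOrder G]
    [CovariantClass G G (· * ·) (· ≤ ·)] [CovariantClass G G (swap (· * ·)) (· ≤ ·)]
    (hG : ∃ g : G, g ≠ 1)
    (hdir : ∀ a b : G, ∃ c, a ≤ c ∧ b ≤ c)
    (hRDP1 : RDP1rel ((· ≤ ·) : G → G → Prop) (· * ·) 1)
    (hI : Nonempty I) (φ : Equiv.Perm I) (n : ℤ) (hn : 1 ≤ n) :
    (HasLeastOIdeal G ∧ ∀ i j : I, ∃ m : ℤ, (φ ^ m) i = j) ↔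
      HasLeastNormalIdeal (G := G) φ n := by
  constructor
  · rintro ⟨⟨H, hH, hHne, hHleast⟩, htrans⟩
    refine ⟨Cideal (oCore H), cideal_normal hn (isCore_oCore H hH), ?_, ?_⟩
    · obtain ⟨s, hsH, hs1, hsne⟩ := exists_pos_ne_one_in H hH hHne
      obtain ⟨i⟩ := hI
      refine cideal_netriv (φ := φ) (isCore_oCore H hH) (f := kdelta i s) (i := i)
        ⟨fun j => ⟨kdelta_pos hs1 i j, ?_⟩, ?_⟩ ?_
      · unfold kdelta
        split
        · exact hsH
        · exact H.one_mem
      · refine (Set.finite_singleton i).subset (fun j hj => Set.mem_singleton_iff.mpr ?_)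
        by_contra hji
        exact hj (kdelta_ne s hji)
      · rw [kdelta_self]; exact hsne
    · exact fun J' hJ' hJ'ne => least_dir hn hdir htrans H hH hHleast J' hJ' hJ'ne
  · rintro ⟨J, hJn, hJne, hJleast⟩
    obtain ⟨s, _, hs1, hsne⟩ := exists_pos_ne_one_in ⊤ (isOIdeal_top hdir) (top_ne_bot' hG)
    obtain ⟨iA⟩ := hI
    have htrans : ∀ i j : I, ∃ m : ℤ, (φ^m) i = j := by
      intro i j
      by_contra hcon
      push_neg at hcon
      have horb : ∀ l : I, J ⊆ Cideal (orbCore φ l) := by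
        intro l
        refine hJleast _ (cideal_normal hn (isCore_orbCore l)) ?_
        refine cideal_netriv (isCore_orbCore l) (f := kdelta l s) (i := l)
          (fun i' => ⟨kdelta_pos hs1 l i', fun hne => ?_⟩) ?_
        · have hil : i' = l := by
            by_contra h
            exact hne (kdelta_ne s h)
          subst hil
          exact ⟨0, by simp⟩
        · rw [kdelta_self]; exact hsne
      have h0 : ∀ p ∈ J, p.1 = 0 := fun p hp => ((horb i) hp).1
      obtain ⟨f, hfJ, l, hl⟩ := nj_exists_ne hJn hJne h0
      obtain ⟨m, hm⟩ := (((horb i) hfJ).2 l).2 hl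
      obtain ⟨m', hm'⟩ := (((horb j) hfJ).2 l).2 hl
      refine hcon (-m' + m) ?_
      rw [zpow_add, Equiv.Perm.mul_apply, hm, ← hm', zpow_neg]
      exact Equiv.symm_apply_apply _ _
    have hCtopN : Cideal (oCore (I := I) (⊤ : Subgroup G)) ≠ {kone} := by
      refine cideal_netriv (φ := φ) (isCore_oCore ⊤ (isOIdeal_top hdir)) (f := kdelta iA s)
        (i := iA) ⟨fun j => ⟨kdelta_pos hs1 iA j, Subgroup.mem_top _⟩, ?_⟩ ?_
      · refine (Set.finite_singleton iA).subset (fun j hj => Set.mem_singleton_iff.mpr ?_)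
        by_contra hji
        exact hj (kdelta_ne s hji)
      · rw [kdelta_self]; exact hsne
    have hsubtop := hJleast _ (cideal_normal hn (isCore_oCore ⊤ (isOIdeal_top hdir))) hCtopN
    have h0 : ∀ p ∈ J, p.1 = 0 := fun p hp => (hsubtop hp).1
    obtain ⟨f₀, hf₀J, l₀, hl₀⟩ := nj_exists_ne hJn hJne h0
    have hs₀N : f₀ l₀ ∈ njSet J := ⟨nj_pos hJn hf₀J l₀, nj_delta_mem hn hJn htrans hf₀J l₀⟩
    refine ⟨⟨Hgen (njSet J) (njSet_one hn hJn) (njSet_mul hn hJn) njSet_pos,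
      hgen_oideal _ _ _ _ (njSet_conj hn hJn hdir), ?_, ?_⟩, htrans⟩
    · intro hbot
      have hmem : f₀ l₀ ∈ Hgen (njSet J) (njSet_one hn hJn) (njSet_mul hn hJn) njSet_pos :=
        mem_hgen.mpr ⟨f₀ l₀, hs₀N,
          le_trans (by simpa using inv_le_inv_of_le' hs₀N.1) hs₀N.1, le_refl _⟩
      rw [hbot] at hmem
      exact hl₀ (Subgroup.mem_bot.mp hmem)
    · intro H' hH' hH'ne
      have hCN : Cideal (oCore (I := I) H') ≠ {kone} := by
        obtain ⟨t, htH, ht1, htne⟩ := exists_pos_ne_one_in H' hH' hH'ne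
        refine cideal_netriv (φ := φ) (isCore_oCore H' hH') (f := kdelta iA t) (i := iA)
          ⟨fun j => ⟨kdelta_pos ht1 iA j, ?_⟩, ?_⟩ ?_
        · unfold kdelta
          split
          · exact htH
          · exact H'.one_mem
        · refine (Set.finite_singleton iA).subset (fun j hj => Set.mem_singleton_iff.mpr ?_)
          by_contra hji
          exact hj (kdelta_ne t hji)
        · rw [kdelta_self]; exact htne
      have hsub := hJleast _ (cideal_normal hn (isCore_oCore H' hH')) hCN
      intro g hg
      obtain ⟨m, hmN, hmg, hgm⟩ := mem_hgen.mp hg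
      have hdm : ((0:ℤ), kdelta iA m) ∈ J := hmN.2 iA
      have hmo : kdelta iA m ∈ oCore H' := (hsub hdm).2
      have hmH' : m ∈ H' := by
        have := (hmo.1 iA).2
        rwa [kdelta_self] at this
      exact hH'.2.1 m⁻¹ (H'.inv_mem hmH') m hmH' g hmg hgm
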